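/- Let φ : Y → X be a continuous map between Hausdorff topological spaces and let Z = Y ∪̇_φ X. If X and Y are zero-dimensional, X is compact, and Y is locally compact, then Z is zero-dimensional. -/

import Mathlib

open TopologicalSpace Set

/-- The topology of `Z = Y ∪̇_φ X` on the disjoint union `X ⊕ Y`: it is generated by the base
consisting of (a) all open subsets of `Y` and
(b) all sets `[U,K] = U ∪ (φ⁻¹(U) \ K)` with `U` open in `X` and `K` compact in `Y`. -/
def dotCup {X Y : Type*} [TopologicalSpace X] [TopologicalSpace Y] (φ : Y → X) :
    TopologicalSpace (X ⊕ Y) :=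
  TopologicalSpace.generateFrom
    ({s | ∃ V : Set Y, IsOpen V ∧ s = Sum.inr '' V} ∪
     {s | ∃ (U : Set X) (K : Set Y), IsOpen U ∧ IsCompact K ∧
        s = Sum.inl '' U ∪ Sum.inr '' (φ ⁻¹' U \ K)})

/-- A space is zero-dimensional iff it has a base of clopen sets. -/
def ZeroDimensional (W : Type*) [TopologicalSpace W] : Prop :=
  ∃ B : Set (Set W), (∀ s ∈ B, IsClopen s) ∧ TopologicalSpace.IsTopologicalBasis B

/-- In a zero-dimensional locally compact Hausdorff space, every point of an open set has a
compact clopen neighborhood inside it. -/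
lemma exists_compact_clopen_nhd {Y : Type*} [TopologicalSpace Y] [T2Space Y]
    [LocallyCompactSpace Y] (hY : ZeroDimensional Y) {y : Y} {V : Set Y}
    (hV : IsOpen V) (hy : y ∈ V) :
    ∃ W : Set Y, IsCompact W ∧ IsClopen W ∧ y ∈ W ∧ W ⊆ V := by
  obtain ⟨K, hK, hyK, hKV⟩ := exists_compact_subset hV hy
  obtain ⟨BY, hBclopen, hBbasis⟩ := hY
  obtain ⟨W, hWB, hyW, hWK⟩ := hBbasis.exists_subset_of_mem_open hyK isOpen_interior
  exact ⟨W, hK.of_isClosed_subset (hBclopen W hWB).1 (hWK.trans interior_subset),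
    hBclopen W hWB, hyW, (hWK.trans interior_subset).trans hKV⟩

/-- Every compact set in a zero-dimensional locally compact Hausdorff space is contained in a
compact clopen set. -/
lemma exists_compact_clopen_superset {Y : Type*} [TopologicalSpace Y] [T2Space Y]
    [LocallyCompactSpace Y] (hY : ZeroDimensional Y) {K : Set Y} (hK : IsCompact K) :
    ∃ K' : Set Y, IsCompact K' ∧ IsClopen K' ∧ K ⊆ K' := by
  choose W hWc hWcl hyW _ using fun y : Y =>
    exists_compact_clopen_nhd hY isOpen_univ (mem_univ y)
  obtain ⟨t, ht⟩ := hK.elim_finite_subcover W (fun y => (hWcl y).2)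
    (fun y _ => mem_iUnion.2 ⟨y, hyW y⟩)
  exact ⟨⋃ y ∈ t, W y, t.isCompact_biUnion (fun y _ => hWc y),
    isClopen_biUnion_finset (fun y _ => hWcl y), ht⟩

/-- If `X, Y` are zero-dimensional, `X` is compact and `Y` is locally compact, then
`Z = Y ∪̇_φ X` is zero-dimensional. -/
theorem dotCup_zeroDimensional {X Y : Type*} [TopologicalSpace X] [TopologicalSpace Y]
    [T2Space X] [T2Space Y] [CompactSpace X] [LocallyCompactSpace Y]
    (φ : Y → X) (hφ : Continuous φ)
    (hX : ZeroDimensional X) (hY : ZeroDimensional Y) :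
    @ZeroDimensional (X ⊕ Y) (dotCup φ) := by
  classical
  obtain ⟨BX, hBXclopen, hBXbasis⟩ := hX
  set S : Set (Set (X ⊕ Y)) :=
    ({s | ∃ V : Set Y, IsOpen V ∧ s = Sum.inr '' V} ∪
     {s | ∃ (U : Set X) (K : Set Y), IsOpen U ∧ IsCompact K ∧
        s = Sum.inl '' U ∪ Sum.inr '' (φ ⁻¹' U \ K)}) with hSdef
  have hT : dotCup φ = TopologicalSpace.generateFrom S := rfl
  set B : Set (Set (X ⊕ Y)) :=
    ({s | ∃ V : Set Y, IsCompact V ∧ IsClopen V ∧ s = Sum.inr '' V} ∪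
     {s | ∃ (U : Set X) (K : Set Y), IsClopen U ∧ IsCompact K ∧ IsClopen K ∧
        s = Sum.inl '' U ∪ Sum.inr '' (φ ⁻¹' U \ K)}) with hBdef
  -- every element of B is open in the generated topology
  have hBopen : ∀ s ∈ B, GenerateOpen S s := by
    rintro s (⟨V, hVc, hVcl, rfl⟩ | ⟨U, K, hUcl, hKc, hKcl, rfl⟩)
    · exact .basic _ (Or.inl ⟨V, hVcl.2, rfl⟩)
    · exact .basic _ (Or.inr ⟨U, K, hUcl.2, hKc, rfl⟩)
  -- every element of B has open complement
  have hBclosed : ∀ s ∈ B, GenerateOpen S sᶜ := by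
    rintro s (⟨V, hVc, hVcl, rfl⟩ | ⟨U, K, hUcl, hKc, hKcl, rfl⟩)
    · have : (Sum.inr '' V : Set (X ⊕ Y))ᶜ =
          Sum.inl '' (univ : Set X) ∪ Sum.inr '' (φ ⁻¹' (univ : Set X) \ V) := by
        ext (x | y) <;> simp
      rw [this]
      exact .basic _ (Or.inr ⟨univ, V, isOpen_univ, hVc, rfl⟩)
    · have : (Sum.inl '' U ∪ Sum.inr '' (φ ⁻¹' U \ K) : Set (X ⊕ Y))ᶜ =
          ⋃₀ {(Sum.inl '' Uᶜ ∪ Sum.inr '' (φ ⁻¹' Uᶜ \ (∅ : Set Y)) : Set (X ⊕ Y)),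
              Sum.inr '' K} := by
        rw [sUnion_pair]
        ext (x | y) <;> simp <;> tauto
      rw [this]
      refine .sUnion _ ?_
      rintro t (rfl | rfl)
      · exact .basic _ (Or.inr ⟨Uᶜ, ∅, isOpen_compl_iff.2 hUcl.1, isCompact_empty, rfl⟩)
      · exact .basic _ (Or.inl ⟨K, hKcl.2, rfl⟩)
  -- B is closed under intersections
  have hBinter : ∀ v ∈ B, ∀ w ∈ B, v ∩ w ∈ B := by
    rintro v (⟨V, hVc, hVcl, rfl⟩ | ⟨U, K, hUcl, hKc, hKcl, rfl⟩) w
      (⟨V', hV'c, hV'cl, rfl⟩ | ⟨U', K', hU'cl, hK'c, hK'cl, rfl⟩)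
    · exact Or.inl ⟨V ∩ V', hVc.inter_right hV'cl.1, hVcl.inter hV'cl,
        (image_inter Sum.inr_injective).symm⟩
    · refine Or.inl ⟨V ∩ (φ ⁻¹' U' \ K'), hVc.inter_right ((hU'cl.preimage hφ).diff hK'cl).1,
        hVcl.inter ((hU'cl.preimage hφ).diff hK'cl), ?_⟩
      ext (x | y) <;> simp <;> tauto
    · refine Or.inl ⟨(φ ⁻¹' U \ K) ∩ V', hV'c.inter_left ((hUcl.preimage hφ).diff hKcl).1,
        ((hUcl.preimage hφ).diff hKcl).inter hV'cl, ?_⟩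
      ext (x | y) <;> simp <;> tauto
    · refine Or.inr ⟨U ∩ U', K ∪ K', hUcl.inter hU'cl, hKc.union hK'c, hKcl.union hK'cl, ?_⟩
      ext (x | y) <;> simp <;> tauto
  -- refinement: every generated open set is a union of members of B
  have key : ∀ u : Set (X ⊕ Y), GenerateOpen S u → ∀ a ∈ u, ∃ v ∈ B, a ∈ v ∧ v ⊆ u := by
    intro u hu
    induction hu with
    | @basic s hs =>
      intro a ha
      rcases hs with ⟨V, hV, rfl⟩ | ⟨U, K, hU, hK, rfl⟩
      · obtain ⟨y, hyV, rfl⟩ := ha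
        obtain ⟨W, hWc, hWcl, hyW, hWV⟩ := exists_compact_clopen_nhd hY hV hyV
        exact ⟨Sum.inr '' W, Or.inl ⟨W, hWc, hWcl, rfl⟩, ⟨y, hyW, rfl⟩, image_mono hWV⟩
      · rcases ha with ⟨x, hx, rfl⟩ | ⟨y, hy, rfl⟩
        · obtain ⟨U', hU'B, hxU', hU'U⟩ := hBXbasis.exists_subset_of_mem_open hx hU
          obtain ⟨K', hK'c, hK'cl, hKK'⟩ := exists_compact_clopen_superset hY hK
          refine ⟨Sum.inl '' U' ∪ Sum.inr '' (φ ⁻¹' U' \ K'),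
            Or.inr ⟨U', K', hBXclopen U' hU'B, hK'c, hK'cl, rfl⟩,
            Or.inl ⟨x, hxU', rfl⟩,
            union_subset_union (image_mono hU'U)
              (image_mono (diff_subset_diff (preimage_mono hU'U) hKK'))⟩
        · have hopen : IsOpen (φ ⁻¹' U \ K) := (hU.preimage hφ).sdiff hK.isClosed
          obtain ⟨W, hWc, hWcl, hyW, hWV⟩ := exists_compact_clopen_nhd hY hopen hy
          exact ⟨Sum.inr '' W, Or.inl ⟨W, hWc, hWcl, rfl⟩, ⟨y, hyW, rfl⟩,
            (image_mono hWV).trans subset_union_right⟩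
    | univ =>
      intro a _
      refine ⟨Sum.inl '' (univ : Set X) ∪ Sum.inr '' (φ ⁻¹' (univ : Set X) \ (∅ : Set Y)),
        Or.inr ⟨univ, ∅, isClopen_univ, isCompact_empty, isClopen_empty, rfl⟩, ?_, subset_univ _⟩
      rcases a with x | y <;> simp
    | inter s t _ _ ihs iht =>
      intro a ha
      obtain ⟨v, hv, hav, hvs⟩ := ihs a ha.1
      obtain ⟨w, hw, haw, hwt⟩ := iht a ha.2
      exact ⟨v ∩ w, hBinter v hv w hw, ⟨hav, haw⟩, inter_subset_inter hvs hwt⟩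
    | sUnion σ _ ih =>
      intro a ha
      obtain ⟨t, htσ, hat⟩ := ha
      obtain ⟨v, hv, hav, hvt⟩ := ih t htσ a hat
      exact ⟨v, hv, hav, hvt.trans (subset_sUnion_of_mem htσ)⟩
  have h1 : ∀ s ∈ B, @IsClopen _ (dotCup φ) s := fun s hs => ⟨@IsClosed.mk _ (dotCup φ) _ (hBclosed s hs), hBopen s hs⟩
  have h2 : @IsTopologicalBasis _ (dotCup φ) B :=
    @isTopologicalBasis_of_isOpen_of_nhds _ (dotCup φ) B
      (fun u hu => hBopen u hu) (fun a u hau hu => key u hu a hau)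
  exact ⟨B, h1, h2⟩
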